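/- For every positive integer u, u + Σ_{t>u} (u(u+1)/(t(t+1)))² ≤ (4/3)·u. -/

import Mathlib

theorem msvc_extreme_point_bound (u : ℕ) (hu : 0 < u) :
    (u : ℝ) + ∑' t : {t : ℕ // u < t},
        (((u : ℝ) * ((u : ℝ) + 1)) / (((t : ℕ) : ℝ) * (((t : ℕ) : ℝ) + 1))) ^ 2 ≤
      (4 / 3) * (u : ℝ) := by
  set f : {t : ℕ // u < t} → ℝ := fun t =>
    (((u : ℝ) * ((u : ℝ) + 1)) / (((t : ℕ) : ℝ) * (((t : ℕ) : ℝ) + 1))) ^ 2 with hf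
  set a : ℕ → ℝ := fun t => 1 / (t : ℝ) ^ 3 with ha
  set C : ℝ := ((u : ℝ) * ((u : ℝ) + 1)) ^ 2 / 3 with hC
  let e : ℕ ≃ {t : ℕ // u < t} :=
    { toFun := fun n => ⟨u + 1 + n, by omega⟩
      invFun := fun t => (t : ℕ) - (u + 1)
      left_inv := fun n => by simp
      right_inv := fun t => by
        have := t.2
        exact Subtype.ext (by simp; omega) }
  have hnn : ∀ n : ℕ, 0 ≤ a (u + 1 + n) - a (u + 2 + n) := by
    intro n
    have h1 : (0:ℝ) < ((u + 1 + n : ℕ) : ℝ) := by positivity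
    have h2 : ((u + 1 + n : ℕ) : ℝ) ≤ ((u + 2 + n : ℕ) : ℝ) := by
      exact_mod_cast by omega
    simp only [ha, sub_nonneg]
    gcongr
  -- telescoping sum
  have htel0 : HasSum (fun n : ℕ => a (u + 1 + n) - a (u + 2 + n)) (a (u + 1)) := by
    rw [hasSum_iff_tendsto_nat_of_nonneg hnn]
    have key : ∀ N : ℕ, ∑ n ∈ Finset.range N, (a (u + 1 + n) - a (u + 2 + n))
        = a (u + 1) - a (u + 1 + N) := by
      intro N
      have := Finset.sum_range_sub' (fun n => a (u + 1 + n)) N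
      simpa [add_assoc, add_comm, add_left_comm] using this
    simp only [key]
    have h1 : Filter.Tendsto (fun N : ℕ => ((u + 1 + N : ℕ) : ℝ) ^ 3)
        Filter.atTop Filter.atTop := by
      apply (Filter.tendsto_pow_atTop (by norm_num : 3 ≠ 0)).comp
      apply tendsto_natCast_atTop_atTop.comp
      exact Filter.tendsto_atTop_atTop.2 fun b => ⟨b, fun n hn => by omega⟩
    have h2 : Filter.Tendsto (fun N : ℕ => a (u + 1 + N)) Filter.atTop (nhds 0) := by
      simpa [ha, one_div, Pi.inv_def] using h1.inv_tendsto_atTop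
    simpa using (tendsto_const_nhds.sub h2)
  have htel : HasSum (fun n : ℕ => C * (a (u + 1 + n) - a (u + 2 + n))) (C * a (u + 1)) :=
    htel0.mul_left C
  -- per-term bound
  have hterm : ∀ n : ℕ, f (e n) ≤ C * (a (u + 1 + n) - a (u + 2 + n)) := by
    intro n
    have ht : (u : ℝ) + 1 ≤ ((u + 1 + n : ℕ) : ℝ) := by
      push_cast; linarith [Nat.cast_nonneg (α := ℝ) n]
    set t : ℝ := ((u + 1 + n : ℕ) : ℝ) with hts
    have ht1 : (1:ℝ) ≤ t := by
      have : (0:ℝ) ≤ (u : ℝ) := Nat.cast_nonneg u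
      linarith
    have ht0 : (0:ℝ) < t := by linarith
    have htn : ((u + 2 + n : ℕ) : ℝ) = t + 1 := by push_cast [hts]; ring
    show ((u : ℝ) * ((u : ℝ) + 1) / (t * (t + 1))) ^ 2
        ≤ C * (1 / t ^ 3 - 1 / ((u + 2 + n : ℕ) : ℝ) ^ 3)
    rw [htn, hC]
    rw [div_pow]
    have hden : (0:ℝ) < (t * (t + 1)) ^ 2 := by positivity
    have key : 3 / (t * (t + 1)) ^ 2 ≤ 1 / t ^ 3 - 1 / (t + 1) ^ 3 := by
      rw [div_sub_div _ _ (by positivity) (by positivity),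
        div_le_div_iff₀ hden (by positivity)]
      nlinarith [sq_nonneg t, ht0.le, ht1]
    calc ((u : ℝ) * ((u : ℝ) + 1)) ^ 2 / (t * (t + 1)) ^ 2
        = ((u : ℝ) * ((u : ℝ) + 1)) ^ 2 / 3 * (3 / (t * (t + 1)) ^ 2) := by ring
      _ ≤ ((u : ℝ) * ((u : ℝ) + 1)) ^ 2 / 3 * (1 / t ^ 3 - 1 / (t + 1) ^ 3) := by
          apply mul_le_mul_of_nonneg_left key (by positivity)
  have hfnn : ∀ n : ℕ, 0 ≤ f (e n) := fun n => by positivity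
  have hsum : Summable (fun n : ℕ => f (e n)) :=
    Summable.of_nonneg_of_le hfnn hterm htel.summable
  have hle : ∑' n : ℕ, f (e n) ≤ C * a (u + 1) :=
    htel.tsum_eq ▸ Summable.tsum_le_tsum hterm hsum htel.summable
  have heq : ∑' t : {t : ℕ // u < t}, f t = ∑' n : ℕ, f (e n) := (e.tsum_eq f).symm
  rw [heq]
  have hfinal : C * a (u + 1) ≤ (1 / 3) * (u : ℝ) := by
    have hu1 : (0:ℝ) < (u : ℝ) + 1 := by positivity
    have : a (u + 1) = 1 / ((u : ℝ) + 1) ^ 3 := by simp [ha]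
    rw [this, hC]
    rw [div_mul_div_comm, div_le_iff₀ (by positivity)]
    have hule : (u : ℝ) ≤ (u : ℝ) + 1 := by linarith
    nlinarith [sq_nonneg ((u:ℝ)), Nat.cast_nonneg (α := ℝ) u, sq_nonneg ((u:ℝ)+1)]
  linarith
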